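/- Let S = ⟨a_1, a_2, a_3⟩ ⊆ ℕ be a numerical semigroup given by its minimal set of generators with a_1 < a_2 < a_3. Then c_eq(S) = (a_3 − a_1) / gcd(a_2 − a_1, a_3 − a_1). -/
import Mathlib


/-- The `S`-degree of an exponent vector. -/
def degS {n : ℕ} {G : Type*} [AddCommMonoid G] (a : Fin n → G) (lam : Fin n → ℕ) : G :=
  ∑ i, lam i • a i

/-- The distance between two factorizations. -/
def factDist {n : ℕ} (lam nu : Fin n → ℕ) : ℕ :=
  ∑ i, (lam i - min (lam i) (nu i))

/-- An `N`-chain of factorizations of `b`, all of the same length, joining `lam` to `nu`. -/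
def IsEqChain {n : ℕ} {G : Type*} [AddCommMonoid G] (a : Fin n → G) (b : G) (N : ℕ∞)
    (lam nu : Fin n → ℕ) : Prop :=
  ∃ k, ∃ γ : Fin (k + 1) → (Fin n → ℕ),
    γ 0 = lam ∧ γ (Fin.last k) = nu ∧
    (∀ j, degS a (γ j) = b ∧ ∑ i, γ j i = ∑ i, lam i) ∧
    (∀ j : Fin k, (factDist (γ j.castSucc) (γ j.succ) : ℕ∞) ≤ N)

/-- The equal catenary degree of an element `b`. -/
noncomputable def ceqElem {n : ℕ} {G : Type*} [AddCommMonoid G] (a : Fin n → G) (b : G) :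
    ℕ∞ :=
  sInf {N : ℕ∞ | ∀ lam nu : Fin n → ℕ, degS a lam = b → degS a nu = b →
    ∑ i, lam i = ∑ i, nu i → IsEqChain a b N lam nu}

/-- The equal catenary degree of the monoid generated by `a`. -/
noncomputable def ceq {n : ℕ} {G : Type*} [AddCommMonoid G] (a : Fin n → G) : ℕ∞ :=
  ⨆ b ∈ AddSubmonoid.closure (Set.range a), ceqElem a b

lemma degS_three (a lam : Fin 3 → ℕ) :
    degS a lam = lam 0 * a 0 + lam 1 * a 1 + lam 2 * a 2 := by
  simp [degS, Fin.sum_univ_three, smul_eq_mul]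

lemma factDist_eq (lam nu : Fin 3 → ℕ) :
    factDist lam nu = ((lam 0 : ℤ) - nu 0).toNat + ((lam 1 : ℤ) - nu 1).toNat
      + ((lam 2 : ℤ) - nu 2).toNat := by
  simp only [factDist, Fin.sum_univ_three]
  omega

lemma kernel_lemma (a : Fin 3 → ℕ) (p q r g : ℕ) (hg : 0 < g)
    (hrg : r * g = a 1 - a 0) (hpg : p * g = a 2 - a 1)
    (hAB : a 0 < a 1) (hBC : a 1 < a 2)
    (hpr : p + r = q) (hcop : Nat.Coprime p r) (hp : 0 < p)
    (lam nu : Fin 3 → ℕ)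
    (hdeg : degS a lam = degS a nu) (hsum : ∑ i, lam i = ∑ i, nu i) :
    ∃ k : ℤ, (nu 0 : ℤ) = lam 0 + k * p ∧ (nu 1 : ℤ) = lam 1 - k * q ∧
      (nu 2 : ℤ) = lam 2 + k * r := by
  have hd : (lam 0 : ℤ) * a 0 + lam 1 * a 1 + lam 2 * a 2
      = (nu 0 : ℤ) * a 0 + nu 1 * a 1 + nu 2 * a 2 := by
    have h := hdeg
    rw [degS_three, degS_three] at h
    exact_mod_cast h
  have hs : (lam 0 : ℤ) + lam 1 + lam 2 = (nu 0 : ℤ) + nu 1 + nu 2 := by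
    have h := hsum
    simp only [Fin.sum_univ_three] at h
    exact_mod_cast h
  have hB : (a 1 : ℤ) = a 0 + (r : ℤ) * g := by
    have h := hrg
    zify [hAB.le] at h
    linarith
  have hC : (a 2 : ℤ) = a 1 + (p : ℤ) * g := by
    have h := hpg
    zify [hBC.le] at h
    linarith
  have hg' : (g : ℤ) ≠ 0 := by exact_mod_cast hg.ne'
  have hzz : (g : ℤ) * (((nu 0 : ℤ) - lam 0) * r - ((nu 2 : ℤ) - lam 2) * p) = 0 := by
    linear_combination hd - ((a 0 : ℤ) + (r : ℤ) * g) * hs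
      - ((lam 1 : ℤ) - nu 1 + lam 2 - nu 2) * hB - ((lam 2 : ℤ) - nu 2) * hC
  have key : ((nu 0 : ℤ) - lam 0) * r = ((nu 2 : ℤ) - lam 2) * p := by
    rcases mul_eq_zero.mp hzz with h | h
    · exact absurd h hg'
    · linarith
  have hco : IsCoprime (p : ℤ) (r : ℤ) := Nat.isCoprime_iff_coprime.mpr hcop
  have hdvd : (p : ℤ) ∣ ((nu 0 : ℤ) - lam 0) :=
    hco.dvd_of_dvd_mul_right ⟨(nu 2 : ℤ) - lam 2, by linarith⟩
  obtain ⟨k, hk⟩ := hdvd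
  have hp' : (p : ℤ) ≠ 0 := by exact_mod_cast hp.ne'
  have h2 : (nu 2 : ℤ) - lam 2 = k * r := by
    apply mul_right_cancel₀ hp'
    linear_combination -key + (r : ℤ) * hk
  have hpr' : (p : ℤ) + r = q := by exact_mod_cast hpr
  exact ⟨k, by linarith [hk], by linear_combination -hs - hk - h2 - k * hpr', by linarith⟩

lemma chain_exists (a : Fin 3 → ℕ) (p q r : ℕ) (hpr : p + r = q)
    (hwa : p * a 0 + r * a 2 = q * a 1)
    (lam nu : Fin 3 → ℕ) (k : ℤ)
    (h0 : (nu 0 : ℤ) = lam 0 + k * p) (h1 : (nu 1 : ℤ) = lam 1 - k * q)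
    (h2 : (nu 2 : ℤ) = lam 2 + k * r) :
    IsEqChain a (degS a lam) q lam nu := by
  set s : ℤ := if 0 ≤ k then 1 else -1 with hsdef
  set m : ℕ := k.natAbs with hmdef
  have hsm : s * (m : ℤ) = k := by
    rcases le_or_gt 0 k with h | h
    · simp only [hsdef, if_pos h]; omega
    · simp only [hsdef, if_neg (not_le.mpr h)]; omega
  set w : Fin 3 → ℤ := ![s * p, -(s * q), s * r] with hwdef
  have hw0 : w 0 = s * p := rfl
  have hw1 : w 1 = -(s * q) := rfl
  have hw2 : w 2 = s * r := rfl
  have hnu : ∀ i, (nu i : ℤ) = lam i + m * w i := by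
    intro i
    fin_cases i
    · rw [show ((⟨0, by norm_num⟩ : Fin 3)) = (0 : Fin 3) from rfl, hw0]
      linear_combination h0 + (p : ℤ) * hsm.symm
    · rw [show ((⟨1, by norm_num⟩ : Fin 3)) = (1 : Fin 3) from rfl, hw1]
      linear_combination h1 - (q : ℤ) * hsm.symm
    · rw [show ((⟨2, by norm_num⟩ : Fin 3)) = (2 : Fin 3) from rfl, hw2]
      linear_combination h2 + (r : ℤ) * hsm.symm
  have hpos : ∀ (j : ℕ), j ≤ m → ∀ i, 0 ≤ (lam i : ℤ) + j * w i := by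
    intro j hj i
    rcases le_or_gt 0 (w i) with hwi | hwi
    · have : 0 ≤ (j : ℤ) * w i := mul_nonneg (by positivity) hwi
      have := (lam i).cast_nonneg (α := ℤ)
      linarith
    · have hle : (m : ℤ) * w i ≤ j * w i := by
        apply mul_le_mul_of_nonpos_right _ hwi.le
        exact_mod_cast hj
      have := (nu i).cast_nonneg (α := ℤ)
      have := hnu i
      linarith
  set γ : Fin (m + 1) → Fin 3 → ℕ :=
    fun j i => ((lam i : ℤ) + j * w i).toNat with hγdef
  have hγ : ∀ (j : Fin (m + 1)) (i : Fin 3), ((γ j i : ℤ)) = lam i + j * w i :=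
    fun j i => Int.toNat_of_nonneg (hpos j (Nat.lt_succ_iff.mp j.isLt) i)
  have hwa' : (p : ℤ) * a 0 + r * a 2 = q * a 1 := by exact_mod_cast hwa
  have hpr' : (p : ℤ) + r = q := by exact_mod_cast hpr
  refine ⟨m, γ, ?_, ?_, ?_, ?_⟩
  · funext i
    have := hγ 0 i
    simp only [Fin.val_zero, Nat.cast_zero, zero_mul, add_zero] at this
    exact_mod_cast this
  · funext i
    have h := hγ (Fin.last m) i
    rw [Fin.val_last, ← hnu i] at h
    exact_mod_cast h
  · intro j
    constructor
    · have : ((degS a (γ j) : ℕ) : ℤ) = ((degS a lam : ℕ) : ℤ) := by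
        rw [degS_three, degS_three]
        push_cast
        rw [hγ j 0, hγ j 1, hγ j 2, hw0, hw1, hw2]
        linear_combination (j : ℤ) * s * hwa'
      exact_mod_cast this
    · have : ((∑ i, γ j i : ℕ) : ℤ) = ((∑ i, lam i : ℕ) : ℤ) := by
        simp only [Fin.sum_univ_three]
        push_cast
        rw [hγ j 0, hγ j 1, hγ j 2, hw0, hw1, hw2]
        linear_combination (j : ℤ) * s * hpr'
      exact_mod_cast this
  · intro j
    have hD : factDist (γ j.castSucc) (γ j.succ) = q := by
      rw [factDist_eq]
      rw [hγ j.castSucc 0, hγ j.castSucc 1, hγ j.castSucc 2,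
        hγ j.succ 0, hγ j.succ 1, hγ j.succ 2, hw0, hw1, hw2]
      rw [Fin.coe_castSucc, Fin.val_succ]
      push_cast
      rcases le_or_gt 0 k with h | h
      · simp only [hsdef, if_pos h]
        have e0 : ((lam 0 : ℤ) + j * (1 * p)) - ((lam 0 : ℤ) + (j + 1) * (1 * p)) = -p := by ring
        have e1 : ((lam 1 : ℤ) + j * (-(1 * q))) - ((lam 1 : ℤ) + (j + 1) * (-(1 * q))) = q := by ring
        have e2 : ((lam 2 : ℤ) + j * (1 * r)) - ((lam 2 : ℤ) + (j + 1) * (1 * r)) = -r := by ring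
        rw [e0, e1, e2]
        omega
      · simp only [hsdef, if_neg (not_le.mpr h)]
        have e0 : ((lam 0 : ℤ) + j * (-1 * p)) - ((lam 0 : ℤ) + (j + 1) * (-1 * p)) = p := by ring
        have e1 : ((lam 1 : ℤ) + j * (-(-1 * q))) - ((lam 1 : ℤ) + (j + 1) * (-(-1 * q))) = -q := by ring
        have e2 : ((lam 2 : ℤ) + j * (-1 * r)) - ((lam 2 : ℤ) + (j + 1) * (-1 * r)) = r := by ring
        rw [e0, e1, e2]
        omega
    rw [hD]

/-- **Corollary.** Let `S = ⟨a_1,a_2,a_3⟩ ⊆ ℕ` be a numerical semigroup given by its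
minimal set of generators `a_1 < a_2 < a_3`.  Then
`c_eq(S) = (a_3 - a_1)/gcd(a_2 - a_1, a_3 - a_1)`. -/
theorem ceq_three_generated
    (a : Fin 3 → ℕ)
    (hmono : StrictMono a)
    -- `S` is a numerical semigroup:
    (hfin : {x : ℕ | x ∉ AddSubmonoid.closure (Set.range a)}.Finite)
    -- `{a_1,a_2,a_3}` is the minimal set of generators:
    (hmin : ∀ i, a i ∉ AddSubmonoid.closure (Set.range a \ {a i})) :
    ceq a = (((a 2 - a 0) / Nat.gcd (a 1 - a 0) (a 2 - a 0) : ℕ) : ℕ∞) := by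
  have h01 : a 0 < a 1 := hmono (by decide : (0 : Fin 3) < 1)
  have h12 : a 1 < a 2 := hmono (by decide : (1 : Fin 3) < 2)
  have h02 : a 0 < a 2 := h01.trans h12
  set g := Nat.gcd (a 1 - a 0) (a 2 - a 0) with hgdef
  have hg : 0 < g := Nat.gcd_pos_of_pos_left _ (by omega)
  set r := (a 1 - a 0) / g with hrdef
  set q := (a 2 - a 0) / g with hqdef
  set p := (a 2 - a 1) / g with hpdef
  have hrg : r * g = a 1 - a 0 := Nat.div_mul_cancel (Nat.gcd_dvd_left _ _)
  have hqg : q * g = a 2 - a 0 := Nat.div_mul_cancel (Nat.gcd_dvd_right _ _)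
  have hdvd : g ∣ a 2 - a 1 := by
    have h := Nat.dvd_sub (Nat.gcd_dvd_right (a 1 - a 0) (a 2 - a 0))
      (Nat.gcd_dvd_left (a 1 - a 0) (a 2 - a 0))
    rwa [show a 2 - a 0 - (a 1 - a 0) = a 2 - a 1 by omega] at h
  have hpg : p * g = a 2 - a 1 := Nat.div_mul_cancel hdvd
  have hp : 0 < p := by
    rcases Nat.eq_zero_or_pos p with h | h
    · exfalso; rw [h, zero_mul] at hpg; omega
    · exact h
  have hr : 0 < r := by
    rcases Nat.eq_zero_or_pos r with h | h
    · exfalso; rw [h, zero_mul] at hrg; omega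
    · exact h
  have hq : 0 < q := by
    rcases Nat.eq_zero_or_pos q with h | h
    · exfalso; rw [h, zero_mul] at hqg; omega
    · exact h
  have hpr : p + r = q := by
    apply Nat.eq_of_mul_eq_mul_right hg
    rw [add_mul, hpg, hrg, hqg]; omega
  have hcop : Nat.Coprime p r := by
    apply Nat.eq_of_mul_eq_mul_right hg
    rw [one_mul]
    calc Nat.gcd p r * g = Nat.gcd (p * g) (r * g) := (Nat.gcd_mul_right p g r).symm
      _ = Nat.gcd (a 2 - a 1) (a 1 - a 0) := by rw [hpg, hrg]
      _ = g := by
          rw [Nat.gcd_comm, hgdef,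
            show a 2 - a 0 = (a 2 - a 1) + (a 1 - a 0) by omega, Nat.gcd_add_self_right]
  have hkey : p * a 0 + r * a 2 = q * a 1 := by
    apply Nat.eq_of_mul_eq_mul_right hg
    have hid : (a 2 - a 1) * a 0 + (a 1 - a 0) * a 2 = (a 2 - a 0) * a 1 := by
      zify [h01.le, h12.le, h02.le]; ring
    calc (p * a 0 + r * a 2) * g = (p * g) * a 0 + (r * g) * a 2 := by ring
      _ = (a 2 - a 1) * a 0 + (a 1 - a 0) * a 2 := by rw [hpg, hrg]
      _ = (a 2 - a 0) * a 1 := hid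
      _ = (q * a 1) * g := by rw [← hqg]; ring
  apply le_antisymm
  · -- upper bound
    refine iSup₂_le fun b hb => ?_
    refine sInf_le ?_
    intro lam nu hlam hnu hsum
    obtain ⟨k, e0, e1, e2⟩ := kernel_lemma a p q r g hg hrg hpg h01 h12 hpr hcop hp
      lam nu (hlam.trans hnu.symm) hsum
    have hc := chain_exists a p q r hpr hkey lam nu k e0 e1 e2
    rwa [hlam] at hc
  · -- lower bound
    have hbmem : q * a 1 ∈ AddSubmonoid.closure (Set.range a) := by
      have h1mem : a 1 ∈ AddSubmonoid.closure (Set.range a) :=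
        AddSubmonoid.subset_closure ⟨1, rfl⟩
      simpa [smul_eq_mul] using AddSubmonoid.nsmul_mem _ h1mem q
    refine le_trans ?_ (le_iSup₂ (f := fun b (_ : b ∈ AddSubmonoid.closure (Set.range a)) =>
      ceqElem a b) (q * a 1) hbmem)
    refine le_sInf fun N hN => ?_
    have hdl : degS a ![0, q, 0] = q * a 1 := by
      rw [degS_three]; simp
    have hdn : degS a ![p, 0, r] = q * a 1 := by
      rw [degS_three]; simpa using hkey
    have hsum0 : ∑ i, (![0, q, 0] : Fin 3 → ℕ) i = ∑ i, (![p, 0, r] : Fin 3 → ℕ) i := by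
      simp [Fin.sum_univ_three]; omega
    obtain ⟨kk, γ, hγ0, hγl, hγprop, hγstep⟩ := hN ![0, q, 0] ![p, 0, r] hdl hdn hsum0
    have hne : γ 0 ≠ γ (Fin.last kk) := by
      rw [hγ0, hγl]
      intro h
      have := congrFun h 1
      simp at this
      omega
    have hstep : ∃ j : Fin kk, γ j.castSucc ≠ γ j.succ := by
      by_contra h
      push_neg at h
      apply hne
      have hall : ∀ j : Fin (kk + 1), γ 0 = γ j := by
        intro j
        induction j using Fin.induction with
        | zero => rfl
        | succ j ih => rw [ih]; exact h j
      exact hall (Fin.last kk)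
    obtain ⟨j, hj⟩ := hstep
    obtain ⟨hd1, hs1⟩ := hγprop j.castSucc
    obtain ⟨hd2, hs2⟩ := hγprop j.succ
    obtain ⟨k', e0, e1, e2⟩ := kernel_lemma a p q r g hg hrg hpg h01 h12 hpr hcop hp
      (γ j.castSucc) (γ j.succ) (hd1.trans hd2.symm) (hs1.trans hs2.symm)
    have hk' : k' ≠ 0 := by
      rintro rfl
      apply hj
      funext i
      fin_cases i
      · simp only [zero_mul, add_zero] at e0; exact_mod_cast e0.symm
      · simp only [zero_mul, sub_zero] at e1; exact_mod_cast e1.symm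
      · simp only [zero_mul, add_zero] at e2; exact_mod_cast e2.symm
    have hdist : q ≤ factDist (γ j.castSucc) (γ j.succ) := by
      rw [factDist_eq]
      rcases lt_trichotomy k' 0 with h | h | h
      · have hk1 : (1 : ℤ) ≤ -k' := by omega
        have hle0 : (p : ℤ) ≤ (γ j.castSucc 0 : ℤ) - γ j.succ 0 := by
          have hq0 : (γ j.castSucc 0 : ℤ) - γ j.succ 0 = (-k') * p := by linear_combination -e0
          rw [hq0]
          exact le_mul_of_one_le_left (Int.natCast_nonneg p) hk1
        have hle2 : (r : ℤ) ≤ (γ j.castSucc 2 : ℤ) - γ j.succ 2 := by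
          have hq2 : (γ j.castSucc 2 : ℤ) - γ j.succ 2 = (-k') * r := by linear_combination -e2
          rw [hq2]
          exact le_mul_of_one_le_left (Int.natCast_nonneg r) hk1
        omega
      · exact absurd h hk'
      · have hk1 : (1 : ℤ) ≤ k' := by omega
        have hle1 : (q : ℤ) ≤ (γ j.castSucc 1 : ℤ) - γ j.succ 1 := by
          have hq1 : (γ j.castSucc 1 : ℤ) - γ j.succ 1 = k' * q := by linear_combination -e1
          rw [hq1]
          exact le_mul_of_one_le_left (Int.natCast_nonneg q) hk1
        omega
    calc (q : ℕ∞) ≤ (factDist (γ j.castSucc) (γ j.succ) : ℕ∞) := by exact_mod_cast hdist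
      _ ≤ N := hγstep j
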